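/- Fix an integer m ≥ 1 and an index i with −m ≤ i ≤ m. The error functional E, viewed as a function of the single coefficient γ_i (with the other coefficients held fixed), is differentiable, and its partial derivative with respect to γ_i equals 4 ∫_0^{π/2} ( −ζ sin(iζ) + Σ_{k=-m}^{m} γ_k cos((k−i)ζ) ) dζ. -/

import Mathlib

open Real Finset

/-- The DRP integrated dispersion error functional. -/
noncomputable def drpError (m : ℕ) (γ : ℤ → ℝ) : ℝ :=
  2 * ∫ ζ in (0 : ℝ)..(π / 2),
    ((ζ - ∑ k ∈ Finset.Icc (-(m : ℤ)) (m : ℤ), γ k * Real.sin ((k : ℝ) * ζ)) ^ 2 +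
     (∑ k ∈ Finset.Icc (-(m : ℤ)) (m : ℤ), γ k * Real.cos ((k : ℝ) * ζ)) ^ 2)

theorem stmt_2 (m : ℕ) (hm : 1 ≤ m) (γ : ℤ → ℝ) (i : ℤ)
    (hi : i ∈ Finset.Icc (-(m : ℤ)) (m : ℤ)) :
    HasDerivAt (fun t : ℝ => drpError m (Function.update γ i t))
      (4 * ∫ ζ in (0 : ℝ)..(π / 2),
        (-ζ * Real.sin ((i : ℝ) * ζ) +
          ∑ k ∈ Finset.Icc (-(m : ℤ)) (m : ℤ), γ k * Real.cos (((k : ℝ) - (i : ℝ)) * ζ)))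
      (γ i) := by
  set f : ℝ → ℝ := fun ζ =>
    (ζ - ∑ k ∈ Finset.Icc (-(m : ℤ)) (m : ℤ), γ k * Real.sin ((k : ℝ) * ζ)) ^ 2 +
      (∑ k ∈ Finset.Icc (-(m : ℤ)) (m : ℤ), γ k * Real.cos ((k : ℝ) * ζ)) ^ 2 with hf
  set g : ℝ → ℝ := fun ζ =>
    -ζ * Real.sin ((i : ℝ) * ζ) +
      ∑ k ∈ Finset.Icc (-(m : ℤ)) (m : ℤ), γ k * Real.cos (((k : ℝ) - (i : ℝ)) * ζ) with hg
  -- sum with updated coefficient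
  have hupd : ∀ (t : ℝ) (φ : ℤ → ℝ),
      ∑ k ∈ Finset.Icc (-(m : ℤ)) (m : ℤ), Function.update γ i t k * φ k =
        (∑ k ∈ Finset.Icc (-(m : ℤ)) (m : ℤ), γ k * φ k) + (t - γ i) * φ i := by
    intro t φ
    rw [← Finset.add_sum_erase _ (fun k => Function.update γ i t k * φ k) hi,
        ← Finset.add_sum_erase _ (fun k => γ k * φ k) hi]
    have hco : ∀ k ∈ (Finset.Icc (-(m : ℤ)) (m : ℤ)).erase i,
        Function.update γ i t k * φ k = γ k * φ k := by
      intro k hk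
      rw [Function.update_of_ne (Finset.ne_of_mem_erase hk)]
    rw [Finset.sum_congr rfl hco, Function.update_self]
    ring
  -- pointwise identity for the integrand
  have hpoint : ∀ (t : ℝ) (ζ : ℝ),
      (ζ - ∑ k ∈ Finset.Icc (-(m : ℤ)) (m : ℤ),
          Function.update γ i t k * Real.sin ((k : ℝ) * ζ)) ^ 2 +
        (∑ k ∈ Finset.Icc (-(m : ℤ)) (m : ℤ),
          Function.update γ i t k * Real.cos ((k : ℝ) * ζ)) ^ 2 =
      f ζ + (t - γ i) * (2 * g ζ) + (t - γ i) ^ 2 := by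
    intro t ζ
    rw [hupd t (fun k => Real.sin ((k : ℝ) * ζ)), hupd t (fun k => Real.cos ((k : ℝ) * ζ))]
    have hgζ : g ζ = -ζ * Real.sin ((i : ℝ) * ζ) +
        ((∑ k ∈ Finset.Icc (-(m : ℤ)) (m : ℤ), γ k * Real.cos ((k : ℝ) * ζ)) *
            Real.cos ((i : ℝ) * ζ) +
          (∑ k ∈ Finset.Icc (-(m : ℤ)) (m : ℤ), γ k * Real.sin ((k : ℝ) * ζ)) *
            Real.sin ((i : ℝ) * ζ)) := by
      simp only [hg]
      have hsum : ∑ k ∈ Finset.Icc (-(m : ℤ)) (m : ℤ), γ k * Real.cos (((k : ℝ) - (i : ℝ)) * ζ) =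
          ∑ k ∈ Finset.Icc (-(m : ℤ)) (m : ℤ),
            (γ k * Real.cos ((k : ℝ) * ζ) * Real.cos ((i : ℝ) * ζ) +
              γ k * Real.sin ((k : ℝ) * ζ) * Real.sin ((i : ℝ) * ζ)) := by
        refine Finset.sum_congr rfl fun k _ => ?_
        rw [sub_mul, Real.cos_sub]
        ring
      rw [hsum, Finset.sum_add_distrib, ← Finset.sum_mul, ← Finset.sum_mul]
    rw [hgζ]
    simp only [hf]
    have hsc := Real.sin_sq_add_cos_sq ((i : ℝ) * ζ)
    linear_combination (t - γ i) ^ 2 * hsc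
  -- continuity / integrability
  have hfc : Continuous f := by
    rw [hf]; fun_prop
  have hgc : Continuous g := by
    rw [hg]; fun_prop
  -- key: drpError as a polynomial in t
  have key : ∀ t : ℝ, drpError m (Function.update γ i t) =
      (2 * ∫ ζ in (0 : ℝ)..(π / 2), f ζ) + 4 * (∫ ζ in (0 : ℝ)..(π / 2), g ζ) * (t - γ i) +
        π * (t - γ i) ^ 2 := by
    intro t
    unfold drpError
    have hcongr : (∫ ζ in (0 : ℝ)..(π / 2),
        ((ζ - ∑ k ∈ Finset.Icc (-(m : ℤ)) (m : ℤ),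
            Function.update γ i t k * Real.sin ((k : ℝ) * ζ)) ^ 2 +
          (∑ k ∈ Finset.Icc (-(m : ℤ)) (m : ℤ),
            Function.update γ i t k * Real.cos ((k : ℝ) * ζ)) ^ 2)) =
        ∫ ζ in (0 : ℝ)..(π / 2), (f ζ + ((t - γ i) * (2 * g ζ) + (t - γ i) ^ 2)) := by
      refine intervalIntegral.integral_congr fun ζ _ => ?_
      rw [hpoint t ζ]; ring
    rw [hcongr]
    have hc1 : Continuous fun ζ => (t - γ i) * (2 * g ζ) := by fun_prop
    rw [intervalIntegral.integral_add (g := fun ζ => (t - γ i) * (2 * g ζ) + (t - γ i) ^ 2) (hfc.intervalIntegrable _ _)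
        ((hc1.add continuous_const).intervalIntegrable _ _),
      intervalIntegral.integral_add (hc1.intervalIntegrable _ _)
        (continuous_const.intervalIntegrable _ _),
      intervalIntegral.integral_const_mul, intervalIntegral.integral_const_mul,
      intervalIntegral.integral_const, smul_eq_mul]
    ring
  -- conclude
  have hfe : (fun t : ℝ => drpError m (Function.update γ i t)) =
      fun t : ℝ => (2 * ∫ ζ in (0 : ℝ)..(π / 2), f ζ) +
        4 * (∫ ζ in (0 : ℝ)..(π / 2), g ζ) * (t - γ i) + π * (t - γ i) ^ 2 :=
    funext key
  rw [hfe]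
  have h1 : HasDerivAt (fun t : ℝ => t - γ i) 1 (γ i) := (hasDerivAt_id _).sub_const _
  have h2 : HasDerivAt (fun t : ℝ =>
      (2 * ∫ ζ in (0 : ℝ)..(π / 2), f ζ) +
        4 * (∫ ζ in (0 : ℝ)..(π / 2), g ζ) * (t - γ i) + π * (t - γ i) ^ 2)
      (0 + 4 * (∫ ζ in (0 : ℝ)..(π / 2), g ζ) * 1 + π * (2 * (γ i - γ i) ^ 1 * 1)) (γ i) := by
    exact ((hasDerivAt_const _ _).add (h1.const_mul _)).add ((h1.pow 2).const_mul π)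
  convert h2 using 1
  simp
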